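/- Let G be an AMP CG over V and G' its EAMP CG. For any α, β ∈ V and Z ⊆ V \ {α, β}, every Z-open path between α and β in G can be transformed into a Z-open path between α and β in G' by replacing every maximal undirected subpath V_1 − V_2 − ... − V_n (n ≥ 2) with V_1 ← ε^{V_1} − ε^{V_2} − ... − ε^{V_n} → V_n; the resulting path is Z-open in G' under the deterministic-node semantics. -/

import Mathlib

/- Mixed graphs with directed and undirected edges. -/
structure MixedGraph (γ : Type*) where
  dir : γ → γ → Prop
  undir : γ → γ → Prop
  undir_symm : ∀ a b, undir a b → undir b a

namespace MixedGraph

variable {β : Type*} (G : MixedGraph β)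

/-- Two nodes are adjacent if joined by some edge. -/
def adj (a b : β) : Prop := G.dir a b ∨ G.dir b a ∨ G.undir a b

/-- The graph is simple: no loops and at most one edge between any pair. -/
def Simple : Prop :=
  (∀ a, ¬ G.dir a a) ∧ (∀ a, ¬ G.undir a a) ∧
  (∀ a b, G.dir a b → ¬ G.dir b a) ∧ (∀ a b, G.dir a b → ¬ G.undir a b)

/-- A semidirected cycle: a cycle whose first edge is directed and whose other
edges are directed or undirected (all pointing forwards). -/
def HasSemidirectedCycle : Prop :=
  ∃ (n : ℕ) (f : Fin (n + 2) → β),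
    f 0 = f (Fin.last (n + 1)) ∧ G.dir (f 0) (f 1) ∧
    ∀ i : Fin (n + 1), G.dir (f i.castSucc) (f i.succ) ∨ G.undir (f i.castSucc) (f i.succ)

/-- A chain graph: a simple graph with no semidirected cycle. -/
def IsChainGraph : Prop := G.Simple ∧ ¬ G.HasSemidirectedCycle

/-- A DAG: a chain graph with no undirected edges. -/
def IsDAG : Prop := G.IsChainGraph ∧ ∀ a b, ¬ G.undir a b

/-- Parents of a set of nodes. -/
def pa (X : Set β) : Set β := {v | v ∉ X ∧ ∃ x ∈ X, G.dir v x}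

/-- Strict ascendants of a set of nodes (strictly descending route to the set). -/
def san (W : Set β) : Set β := {v | v ∉ W ∧ ∃ w ∈ W, Relation.TransGen G.dir v w}

/-- B is a triplex node between A and C: A → B ← C, A → B − C, or A − B ← C. -/
def triplex (A B C : β) : Prop :=
  (G.dir A B ∧ G.dir C B) ∨ (G.dir A B ∧ G.undir B C) ∨ (G.undir A B ∧ G.dir C B)

/-- B is a non-triplex node between A and C. -/
def nontriplex (A B C : β) : Prop :=
  G.adj A B ∧ G.adj B C ∧ ¬ G.triplex A B C

/-- A route: a nonempty sequence of consecutively adjacent nodes. -/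
def IsRoute (l : List β) : Prop := l ≠ [] ∧ l.Chain' G.adj

/-- A path that is open given the determined set `D` (AMP path-based semantics). -/
def AMPOpenPath (D : Set β) (l : List β) : Prop :=
  G.IsRoute l ∧ l.Nodup ∧
  (∀ A B C, [A, B, C] <:+: l → G.triplex A B C → B ∈ D ∪ G.san D) ∧
  (∀ A B C, [A, B, C] <:+: l → G.nontriplex A B C → B ∈ D →
    (G.undir A B ∧ G.undir B C ∧ ∃ p ∈ G.pa {B}, p ∉ D))

/-- A route that is open given the determined set `D` (AMP route-based semantics). -/
def AMPOpenRoute (D : Set β) (l : List β) : Prop :=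
  G.IsRoute l ∧
  (∀ A B C, [A, B, C] <:+: l → G.triplex A B C → B ∈ D) ∧
  (∀ A B C, [A, B, C] <:+: l → G.nontriplex A B C → B ∉ D)

/-- AMP separation (path-based) of X and Y given determined set D. -/
def AMPSep (D X Y : Set β) : Prop :=
  ∀ (l : List β) (x y : β), x ∈ X → y ∈ Y → l.head? = some x → l.getLast? = some y →
    ¬ G.AMPOpenPath D l

/-- AMP separation (route-based) of X and Y given determined set D. -/
def AMPSepRoute (D X Y : Set β) : Prop :=
  ∀ (l : List β) (x y : β), x ∈ X → y ∈ Y → l.head? = some x → l.getLast? = some y →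
    ¬ G.AMPOpenRoute D l

/-- `s` is a collider section of the route `l`: a maximal undirected subroute of `l`
entered by arrowheads at both ends. -/
def IsColliderSection (l s : List β) : Prop :=
  s ≠ [] ∧ List.Chain' G.undir s ∧
  ∃ pre post A C, l = pre ++ s ++ post ∧
    pre.getLast? = some A ∧ post.head? = some C ∧
    (∀ b, s.head? = some b → G.dir A b) ∧ (∀ b, s.getLast? = some b → G.dir C b) ∧
    (∀ a b, pre.getLast? = some a → s.head? = some b → ¬ G.undir a b) ∧
    (∀ a b, s.getLast? = some a → post.head? = some b → ¬ G.undir a b)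

/-- `s` is a non-collider section of the route `l`: a maximal undirected subroute of `l`
not entered by arrowheads at both ends. -/
def IsNonColliderSection (l s : List β) : Prop :=
  s ≠ [] ∧ List.Chain' G.undir s ∧
  ∃ pre post, l = pre ++ s ++ post ∧
    (∀ a b, pre.getLast? = some a → s.head? = some b → ¬ G.undir a b) ∧
    (∀ a b, s.getLast? = some a → post.head? = some b → ¬ G.undir a b) ∧
    ¬ ((∃ A, pre.getLast? = some A ∧ ∀ b, s.head? = some b → G.dir A b) ∧
       (∃ C, post.head? = some C ∧ ∀ b, s.getLast? = some b → G.dir C b))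

/-- A route that is open given the determined set `D` (LWF semantics). -/
def LWFOpenRoute (D : Set β) (l : List β) : Prop :=
  G.IsRoute l ∧
  (∀ s, G.IsColliderSection l s → ∃ x ∈ s, x ∈ D) ∧
  (∀ s, G.IsNonColliderSection l s → ∀ x ∈ s, x ∉ D)

/-- LWF separation of X and Y given determined set D. -/
def LWFSep (D X Y : Set β) : Prop :=
  ∀ (l : List β) (x y : β), x ∈ X → y ∈ Y → l.head? = some x → l.getLast? = some y →
    ¬ G.LWFOpenRoute D l

/-- Closure of Z under a set `det` of deterministic relationships: `(S, a) ∈ det`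
means that `a` is a function of `S`. -/
inductive Determined (det : Set (Set β × β)) (Z : Set β) : β → Prop
  | base : ∀ a, a ∈ Z → Determined det Z a
  | step : ∀ (S : Set β) (a : β), (S, a) ∈ det → (∀ b ∈ S, Determined det Z b) →
      Determined det Z a

/-- The set D(Z) of nodes determined by Z. -/
def DSet (det : Set (Set β × β)) (Z : Set β) : Set β := {a | Determined det Z a}

end MixedGraph

section EAMP

variable {α : Type*}

/-- Directed edges of the EAMP CG: `inl` nodes are the original nodes,
`inr` nodes are the error nodes. -/
def eampDir (G : MixedGraph α) : (α ⊕ α) → (α ⊕ α) → Prop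
  | Sum.inl x, Sum.inl y => G.dir x y
  | Sum.inr x, Sum.inl y => x = y
  | _, _ => False

/-- Undirected edges of the EAMP CG: `ε^A − ε^B` for each `A − B` of G. -/
def eampUndir (G : MixedGraph α) : (α ⊕ α) → (α ⊕ α) → Prop
  | Sum.inr x, Sum.inr y => G.undir x y
  | _, _ => False

/-- The EAMP CG G' of an AMP CG G: add `ε^A → A` for each node A and replace
each undirected edge `A − B` by `ε^A − ε^B`. -/
def eamp (G : MixedGraph α) : MixedGraph (α ⊕ α) where
  dir := eampDir G
  undir := eampUndir G
  undir_symm := by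
    rintro (x | x) (y | y) h <;>
      simp only [eampUndir] at h ⊢ <;>
      first
        | exact h.elim
        | exact G.undir_symm _ _ h

/-- The parents of A in G, embedded as nodes of the EAMP CG. -/
def eampPa (G : MixedGraph α) (A : α) : Set (α ⊕ α) := {x | ∃ B, G.dir B A ∧ x = Sum.inl B}

/-- The deterministic relationships of the EAMP CG: each A is a function of
`pa_G(A) ∪ {ε^A}`, and each `ε^A` is a function of `pa_G(A) ∪ {A}`. -/
def eampDet (G : MixedGraph α) : Set (Set (α ⊕ α) × (α ⊕ α)) :=
  {p | (∃ A, p = (eampPa G A ∪ {Sum.inr A}, Sum.inl A)) ∨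
       (∃ A, p = (eampPa G A ∪ {Sum.inl A}, Sum.inr A))}

/-- Marginalize the node B out of G: add `A → C` for every pair `A → B`, `B → C`,
then delete B together with all edges it participates in. -/
def marg {β : Type*} (G : MixedGraph β) (B : β) : MixedGraph β where
  dir a c := a ≠ B ∧ c ≠ B ∧ (G.dir a c ∨ (G.dir a B ∧ G.dir B c))
  undir a c := a ≠ B ∧ c ≠ B ∧ G.undir a c
  undir_symm := by
    rintro a c ⟨h1, h2, h3⟩
    exact ⟨h2, h1, G.undir_symm _ _ h3⟩

/-- Marginalize a list of nodes out of G, one at a time. -/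
def margList {β : Type*} (G : MixedGraph β) (L : List β) : MixedGraph β := L.foldl marg G

/-- Directed edges of the DAG G'': those of G' among `V ∪ ε`, plus
`ε^A → S_{ε^Aε^B} ← ε^B` for each undirected edge `ε^A − ε^B` of G'. -/
def dagDir (G : MixedGraph α) : ((α ⊕ α) ⊕ Sym2 α) → ((α ⊕ α) ⊕ Sym2 α) → Prop
  | Sum.inl x, Sum.inl y => (eamp G).dir x y
  | Sum.inl (Sum.inr x), Sum.inr s => ∃ y, G.undir x y ∧ s = s(x, y)
  | _, _ => False

/-- The DAG G'' obtained from G' by replacing each `ε^A − ε^B` with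
`ε^A → S_{ε^Aε^B} ← ε^B`, where the selection nodes are fresh. -/
def dagOf (G : MixedGraph α) : MixedGraph ((α ⊕ α) ⊕ Sym2 α) where
  dir := dagDir G
  undir _ _ := False
  undir_symm := by intro a b h; exact h.elim

/-- The set S of selection nodes of G''. -/
def selNodes (G : MixedGraph α) : Set ((α ⊕ α) ⊕ Sym2 α) :=
  {v | ∃ x y, G.undir x y ∧ v = Sum.inr s(x, y)}

/-- The deterministic relationships of G'' (the same as those of G'). -/
def dagDet (G : MixedGraph α) : Set (Set ((α ⊕ α) ⊕ Sym2 α) × ((α ⊕ α) ⊕ Sym2 α)) :=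
  {p | ∃ q ∈ eampDet G, p = (Sum.inl '' q.1, Sum.inl q.2)}

/-- Structural characterization of EAMP CGs over `W ∪ ε`: a chain graph whose
undirected edges join only error nodes and whose error nodes have no incoming
directed edges. -/
def IsEAMPStruct (G : MixedGraph (α ⊕ α)) : Prop :=
  G.IsChainGraph ∧
  (∀ a b, G.undir a b → (∃ x, a = Sum.inr x) ∧ ∃ y, b = Sum.inr y) ∧
  (∀ a x, ¬ G.dir a (Sum.inr x))

/-- K is a connectivity component: a maximal set connected by undirected paths. -/
def IsConnComp {β : Type*} (G : MixedGraph β) (K : Set β) : Prop :=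
  ∃ a, K = {b | Relation.ReflTransGen G.undir a b}

end EAMP


section Stmt5Aux

variable {α : Type*} (G : MixedGraph α)

@[simp] lemma eamp_dir_def : (eamp G).dir = eampDir G := rfl
@[simp] lemma eamp_undir_def : (eamp G).undir = eampUndir G := rfl

@[simp] lemma eampDir_ll {x y : α} : eampDir G (Sum.inl x) (Sum.inl y) ↔ G.dir x y := Iff.rfl
@[simp] lemma eampDir_rl {x y : α} : eampDir G (Sum.inr x) (Sum.inl y) ↔ x = y := Iff.rfl
@[simp] lemma eampDir_lr {x : α} {u : α ⊕ α} : ¬ eampDir G u (Sum.inr x) := by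
  cases u <;> exact fun h => h
@[simp] lemma eampUndir_rr {x y : α} : eampUndir G (Sum.inr x) (Sum.inr y) ↔ G.undir x y := Iff.rfl
@[simp] lemma eampUndir_l_left {x : α} {u : α ⊕ α} : ¬ eampUndir G (Sum.inl x) u := by
  cases u <;> exact fun h => h
@[simp] lemma eampUndir_l_right {x : α} {u : α ⊕ α} : ¬ eampUndir G u (Sum.inl x) := by
  cases u <;> exact fun h => h

variable {Z : Set α}

lemma det_char {v : α ⊕ α}
    (h : MixedGraph.Determined (eampDet G) (Sum.inl '' Z) v) :
    (∀ x, v = Sum.inl x → x ∈ Z) ∧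
    (∀ x, v = Sum.inr x → x ∈ Z ∧ ∀ p, G.dir p x → p ∈ Z) := by
  induction h with
  | base a haa =>
    obtain ⟨x, hx, rfl⟩ := haa
    refine ⟨fun y hy => by cases hy; exact hx, fun y hy => by cases hy⟩
  | step S a hSa hall ih =>
    rcases hSa with ⟨A, hp⟩ | ⟨A, hp⟩
    · cases hp
      refine ⟨fun y hy => ?_, fun y hy => by cases hy⟩
      cases hy
      exact ((ih (Sum.inr A) (Or.inr rfl)).2 A rfl).1
    · cases hp
      constructor
      · intro y hy; cases hy
      intro y hy
      cases hy
      refine ⟨(ih (Sum.inl A) (Or.inr rfl)).1 A rfl, fun p hpd => ?_⟩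
      exact (ih (Sum.inl p) (Or.inl ⟨p, hpd, rfl⟩)).1 p rfl

lemma det_inl {x : α} :
    Sum.inl x ∈ MixedGraph.DSet (eampDet G) (Sum.inl '' Z) ↔ x ∈ Z := by
  constructor
  · intro h; exact (det_char G h).1 x rfl
  · intro h; exact MixedGraph.Determined.base _ ⟨x, h, rfl⟩

lemma det_inr {x : α} :
    Sum.inr x ∈ MixedGraph.DSet (eampDet G) (Sum.inl '' Z) ↔
      (x ∈ Z ∧ ∀ p, G.dir p x → p ∈ Z) := by
  constructor
  · intro h; exact (det_char G h).2 x rfl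
  · rintro ⟨hx, hpa⟩
    refine MixedGraph.Determined.step (eampPa G x ∪ {Sum.inl x}) _ (Or.inr ⟨x, rfl⟩) ?_
    rintro v (⟨B, hB, rfl⟩ | hv)
    · exact MixedGraph.Determined.base _ ⟨B, hpa B hB, rfl⟩
    · cases hv; exact MixedGraph.Determined.base _ ⟨x, hx, rfl⟩

lemma lift_mem {x : α} (hx : x ∈ Z ∪ G.san Z) :
    Sum.inl x ∈ MixedGraph.DSet (eampDet G) (Sum.inl '' Z) ∪
      (eamp G).san (MixedGraph.DSet (eampDet G) (Sum.inl '' Z)) := by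
  rcases hx with hx | ⟨hxZ, w, hwZ, htg⟩
  · exact Or.inl ((det_inl G).mpr hx)
  · refine Or.inr ⟨fun h => hxZ ((det_inl G).mp h), Sum.inl w, (det_inl G).mpr hwZ, ?_⟩
    exact Relation.TransGen.lift Sum.inl (fun a b h => h) _ _ htg

/-- List helpers -/
lemma infix_triple_cons {β : Type*} {A B C u : β} {L : List β}
    (h : [A, B, C] <:+: u :: L) :
    (A = u ∧ ∃ r, L = B :: C :: r) ∨ [A, B, C] <:+: L := by
  rcases h with ⟨s, t, he⟩
  cases s with
  | nil =>
    simp only [List.nil_append] at he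
    cases he
    exact Or.inl ⟨rfl, t, rfl⟩
  | cons v s' =>
    simp only [List.cons_append] at he
    cases he
    exact Or.inr ⟨s', t, rfl⟩

lemma triple_len {β : Type*} {A B C : β} {L : List β} (h : [A, B, C] <:+: L) :
    3 ≤ L.length := by
  simpa using h.sublist.length_le

lemma infix_of_eq_append {β : Type*} {l₀ s l : List β} (h : l₀ = s ++ l) : l <:+: l₀ :=
  ⟨s, [], by simp [h]⟩


open Classical in
/-- The transformation: `false` = outside an undirected segment, `true` = inside. -/
noncomputable def tr (G : MixedGraph α) : Bool → List α → List (α ⊕ α)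
  | _, [] => []
  | false, [x] => [Sum.inl x]
  | true, [x] => [Sum.inr x, Sum.inl x]
  | false, x :: y :: t =>
      if G.undir x y then Sum.inl x :: Sum.inr x :: tr G true (y :: t)
      else Sum.inl x :: tr G false (y :: t)
  | true, x :: y :: t =>
      if G.undir x y then Sum.inr x :: tr G true (y :: t)
      else Sum.inr x :: Sum.inl x :: tr G false (y :: t)

variable {x y : α} {t : List α}

lemma tr_false_undir (h : G.undir x y) :
    tr G false (x :: y :: t) = Sum.inl x :: Sum.inr x :: tr G true (y :: t) := by
  simp [tr, h]

lemma tr_false_dir (h : ¬ G.undir x y) :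
    tr G false (x :: y :: t) = Sum.inl x :: tr G false (y :: t) := by
  simp [tr, h]

lemma tr_true_undir (h : G.undir x y) :
    tr G true (x :: y :: t) = Sum.inr x :: tr G true (y :: t) := by
  simp [tr, h]

lemma tr_true_dir (h : ¬ G.undir x y) :
    tr G true (x :: y :: t) = Sum.inr x :: Sum.inl x :: tr G false (y :: t) := by
  simp [tr, h]

lemma tr_false_cons (x : α) (t : List α) :
    ∃ r, tr G false (x :: t) = Sum.inl x :: r := by
  cases t with
  | nil => exact ⟨[], rfl⟩
  | cons y t =>
    by_cases h : G.undir x y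
    · exact ⟨_, tr_false_undir G h⟩
    · exact ⟨_, tr_false_dir G h⟩

lemma tr_true_cons (x : α) (t : List α) :
    ∃ r, tr G true (x :: t) = Sum.inr x :: r := by
  cases t with
  | nil => exact ⟨[Sum.inl x], rfl⟩
  | cons y t =>
    by_cases h : G.undir x y
    · exact ⟨_, tr_true_undir G h⟩
    · exact ⟨_, tr_true_dir G h⟩

lemma tr_last (t : List α) : ∀ (x : α) (bfl : Bool),
    (tr G bfl (x :: t)).getLast? = (x :: t).getLast?.map Sum.inl := by
  induction t with
  | nil => intro x bfl; cases bfl <;> simp [tr]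
  | cons y t ih =>
    intro x bfl
    have hy : (x :: y :: t).getLast? = (y :: t).getLast? := List.getLast?_cons_cons ..
    cases bfl <;> by_cases h : G.undir x y
    · rw [tr_false_undir G h, hy]
      obtain ⟨r, hr⟩ := tr_true_cons G y t
      rw [hr, List.getLast?_cons_cons, List.getLast?_cons_cons, ← hr, ih y true]
    · rw [tr_false_dir G h, hy]
      obtain ⟨r, hr⟩ := tr_false_cons G y t
      rw [hr, List.getLast?_cons_cons, ← hr, ih y false]
    · rw [tr_true_undir G h, hy]
      obtain ⟨r, hr⟩ := tr_true_cons G y t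
      rw [hr, List.getLast?_cons_cons, ← hr, ih y true]
    · rw [tr_true_dir G h, hy]
      obtain ⟨r, hr⟩ := tr_false_cons G y t
      rw [hr, List.getLast?_cons_cons, List.getLast?_cons_cons, ← hr, ih y false]

lemma chain'_cons' {β : Type*} {R : β → β → Prop} {a b : β} {l : List β} :
    List.Chain' R (a :: b :: l) ↔ R a b ∧ List.Chain' R (b :: l) := List.isChain_cons_cons

lemma chain'_pair' {β : Type*} {R : β → β → Prop} {a b : β} :
    List.Chain' R [a, b] ↔ R a b := List.isChain_pair

lemma tr_chain (t : List α) : ∀ (x : α), (x :: t).Chain' G.adj →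
    ∀ bfl, (tr G bfl (x :: t)).Chain' (eamp G).adj := by
  induction t with
  | nil =>
    intro x _ bfl
    cases bfl
    · simp [tr]
      exact List.isChain_singleton _
    · refine chain'_pair'.mpr (Or.inl ?_)
      exact rfl
  | cons y t ih =>
    intro x hch bfl
    rw [chain'_cons'] at hch
    obtain ⟨hadj, hch⟩ := hch
    have hfc := tr_false_cons G y t
    have htc := tr_true_cons G y t
    cases bfl <;> by_cases h : G.undir x y <;>
        first
          | rw [tr_false_undir G h]
          | rw [tr_false_dir G h]
          | rw [tr_true_undir G h]
          | rw [tr_true_dir G h]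
    · obtain ⟨r, hr⟩ := htc
      rw [hr, chain'_cons', chain'_cons']
      refine ⟨Or.inr (Or.inl rfl), Or.inr (Or.inr h), ?_⟩
      rw [← hr]; exact ih y hch true
    · obtain ⟨r, hr⟩ := hfc
      rw [hr, chain'_cons']
      have : (eamp G).adj (Sum.inl x) (Sum.inl y) := by
        rcases hadj with hd | hd | hd
        · exact Or.inl hd
        · exact Or.inr (Or.inl hd)
        · exact absurd hd h
      refine ⟨this, ?_⟩
      rw [← hr]; exact ih y hch false
    · obtain ⟨r, hr⟩ := htc
      rw [hr, chain'_cons']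
      refine ⟨Or.inr (Or.inr h), ?_⟩
      rw [← hr]; exact ih y hch true
    · obtain ⟨r, hr⟩ := hfc
      rw [hr, chain'_cons', chain'_cons']
      have : (eamp G).adj (Sum.inl x) (Sum.inl y) := by
        rcases hadj with hd | hd | hd
        · exact Or.inl hd
        · exact Or.inr (Or.inl hd)
        · exact absurd hd h
      exact ⟨Or.inl rfl, this, by rw [← hr]; exact ih y hch false⟩

lemma tr_nodup (t : List α) : ∀ (x : α), (x :: t).Nodup →
    ∀ bfl, (tr G bfl (x :: t)).Nodup ∧
      ∀ v ∈ tr G bfl (x :: t), Sum.elim id id v ∈ x :: t := by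
  induction t with
  | nil =>
    intro x _ bfl
    cases bfl <;> simp [tr]
  | cons y t ih =>
    intro x hnd bfl
    have hx : x ∉ y :: t := by simp_all
    have hnd' : (y :: t).Nodup := hnd.of_cons
    have iht := ih y hnd' true
    have ihf := ih y hnd' false
    have memf : ∀ v ∈ tr G false (y :: t), Sum.elim id id v ∈ x :: y :: t :=
      fun v hv => List.mem_cons_of_mem _ (ihf.2 v hv)
    have memt : ∀ v ∈ tr G true (y :: t), Sum.elim id id v ∈ x :: y :: t :=
      fun v hv => List.mem_cons_of_mem _ (iht.2 v hv)
    have hxf : ∀ (u : α ⊕ α), Sum.elim id id u = x → u ∉ tr G false (y :: t) := by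
      intro u hu hmem
      exact hx (by simpa [hu] using ihf.2 u hmem)
    have hxt : ∀ (u : α ⊕ α), Sum.elim id id u = x → u ∉ tr G true (y :: t) := by
      intro u hu hmem
      exact hx (by simpa [hu] using iht.2 u hmem)
    cases bfl <;> by_cases h : G.undir x y <;>
        first
          | rw [tr_false_undir G h]
          | rw [tr_false_dir G h]
          | rw [tr_true_undir G h]
          | rw [tr_true_dir G h]
    · refine ⟨?_, ?_⟩
      · refine List.nodup_cons.mpr ⟨?_, List.nodup_cons.mpr ⟨hxt (Sum.inr x) rfl, iht.1⟩⟩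
        simp only [List.mem_cons]
        rintro (h' | h')
        · cases h'
        · exact hxt (Sum.inl x) rfl h'
      · intro v hv
        simp only [List.mem_cons] at hv
        rcases hv with rfl | rfl | hv
        · simp
        · simp
        · exact memt v hv
    · refine ⟨List.nodup_cons.mpr ⟨hxf (Sum.inl x) rfl, ihf.1⟩, ?_⟩
      intro v hv
      simp only [List.mem_cons] at hv
      rcases hv with rfl | hv
      · simp
      · exact memf v hv
    · refine ⟨List.nodup_cons.mpr ⟨hxt (Sum.inr x) rfl, iht.1⟩, ?_⟩
      intro v hv
      simp only [List.mem_cons] at hv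
      rcases hv with rfl | hv
      · simp
      · exact memt v hv
    · refine ⟨?_, ?_⟩
      · refine List.nodup_cons.mpr ⟨?_, List.nodup_cons.mpr ⟨hxf (Sum.inl x) rfl, ihf.1⟩⟩
        simp only [List.mem_cons]
        rintro (h' | h')
        · cases h'
        · exact hxf (Sum.inr x) rfl h'
      · intro v hv
        simp only [List.mem_cons] at hv
        rcases hv with rfl | rfl | hv
        · simp
        · simp
        · exact memf v hv


variable {a b x y w z : α} {l₀ : List α}

lemma left_ext (ha : l₀.head? = some a) (h : [x, y] <:+: l₀) :
    x = a ∨ ∃ w, [w, x, y] <:+: l₀ := by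
  obtain ⟨s, t, he⟩ := h
  rcases s.eq_nil_or_concat with rfl | ⟨s', w, rfl⟩
  · left
    rw [← he] at ha
    simpa using ha
  · right
    exact ⟨w, s', t, by simpa using he⟩

lemma right_ext (hb : l₀.getLast? = some b) (h : [x, y] <:+: l₀) :
    y = b ∨ ∃ w, [x, y, w] <:+: l₀ := by
  obtain ⟨s, t, he⟩ := h
  cases t with
  | nil =>
    left
    rw [← he, List.append_nil, List.getLast?_append_of_ne_nil s (by simp)] at hb
    simpa using hb
  | cons w t' =>
    right
    exact ⟨w, s, t', by simpa using he⟩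

lemma adj2 (hch : l₀.Chain' G.adj) (h : [x, y] <:+: l₀) : G.adj x y :=
  chain'_pair'.mp (hch.infix h)

lemma emit_next {Z : Set α} (hG : G.IsChainGraph) (hl : G.AMPOpenPath Z l₀)
    (ha : l₀.head? = some a) (haZ : a ∉ Z)
    (h2 : [x, y] <:+: l₀) (hd : G.dir x y) : x ∉ Z := by
  rcases left_ext ha h2 with rfl | ⟨w, hw⟩
  · exact haZ
  · intro hxZ
    have hwx0 : [w, x] <:+: [w, x, y] := ⟨[], [y], rfl⟩
    have hwx : [w, x] <:+: l₀ := hwx0.trans hw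
    have hadjwx : G.adj w x := adj2 G hl.1.2 hwx
    have hnt : G.nontriplex w x y := by
      refine ⟨hadjwx, Or.inl hd, ?_⟩
      rintro (⟨h1, h2'⟩ | ⟨h1, h2'⟩ | ⟨h1, h2'⟩)
      · exact hG.1.2.2.1 x y hd h2'
      · exact hG.1.2.2.2 x y hd h2'
      · exact hG.1.2.2.1 x y hd h2'
    exact hG.1.2.2.2 x y hd (hl.2.2.2 w x y hw hnt hxZ).2.1

lemma emit_prev {Z : Set α} (hG : G.IsChainGraph) (hl : G.AMPOpenPath Z l₀)
    (hb : l₀.getLast? = some b) (hbZ : b ∉ Z)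
    (h2 : [y, x] <:+: l₀) (hd : G.dir x y) : x ∉ Z := by
  rcases right_ext hb h2 with rfl | ⟨w, hw⟩
  · exact hbZ
  · intro hxZ
    have hxw0 : [x, w] <:+: [y, x, w] := ⟨[y], [], by simp⟩
    have hxw : [x, w] <:+: l₀ := hxw0.trans hw
    have hyx : [y, x] <:+: l₀ := h2
    have hnt : G.nontriplex y x w := by
      refine ⟨adj2 G hl.1.2 hyx, adj2 G hl.1.2 hxw, ?_⟩
      rintro (⟨h1, h2'⟩ | ⟨h1, h2'⟩ | ⟨h1, h2'⟩)
      · exact hG.1.2.2.1 x y hd h1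
      · exact hG.1.2.2.1 x y hd h1
      · exact hG.1.2.2.2 x y hd (G.undir_symm _ _ h1)
    exact hG.1.2.2.2 x y hd
      (G.undir_symm _ _ (hl.2.2.2 y x w hw hnt hxZ).1)

lemma midseg {Z : Set α} (hG : G.IsChainGraph) (hl : G.AMPOpenPath Z l₀)
    (h3 : [w, x, y] <:+: l₀) (h1 : G.undir w x) (h2 : G.undir x y) (hxZ : x ∈ Z) :
    ∃ p, G.dir p x ∧ p ∉ Z := by
  have hnt : G.nontriplex w x y := by
    refine ⟨Or.inr (Or.inr h1), Or.inr (Or.inr h2), ?_⟩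
    rintro (⟨hd, _⟩ | ⟨hd, _⟩ | ⟨_, hd⟩)
    · exact hG.1.2.2.2 w x hd h1
    · exact hG.1.2.2.2 w x hd h1
    · exact hG.1.2.2.2 y x hd (G.undir_symm _ _ h2)
  obtain ⟨-, -, p, ⟨-, x', hx', hpd⟩, hpZ⟩ := hl.2.2.2 w x y h3 hnt hxZ
  cases hx'
  exact ⟨p, hpd, hpZ⟩

/-- The key invariant for triples of the transformed path. -/
def Cond (G : MixedGraph α) (Z : Set α) (A B C : α ⊕ α) : Prop :=
  ((eamp G).triplex A B C →
    B ∈ MixedGraph.DSet (eampDet G) (Sum.inl '' Z) ∪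
      (eamp G).san (MixedGraph.DSet (eampDet G) (Sum.inl '' Z))) ∧
  (¬ (eamp G).triplex A B C → B ∉ MixedGraph.DSet (eampDet G) (Sum.inl '' Z))

lemma triple_eq {β : Type*} {A B C u v w : β} (h : [A, B, C] <:+: [u, v, w]) :
    A = u ∧ B = v ∧ C = w := by
  rcases infix_triple_cons h with ⟨rfl, r, hr⟩ | h'
  · cases hr
    exact ⟨rfl, rfl, rfl⟩
  · have := triple_len h'
    simp at this

lemma L1 {Z : Set α} (hG : G.IsChainGraph) (hl : G.AMPOpenPath Z l₀)
    (ha : l₀.head? = some a) (hb : l₀.getLast? = some b) (haZ : a ∉ Z) (hbZ : b ∉ Z)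
    {s : List α} {t' : List α} (hs : l₀ = s ++ x :: y :: t') (hu : ¬ G.undir x y)
    {B C : α ⊕ α} {r : List (α ⊕ α)} (he : tr G false (y :: t') = B :: C :: r) :
    Cond G Z (Sum.inl x) B C := by
  have h2 : [x, y] <:+: l₀ := ⟨s, t', by simp [hs]⟩
  have hadjxy : G.adj x y := adj2 G hl.1.2 h2
  cases t' with
  | nil => simp [tr] at he
  | cons z t'' =>
    have h3 : [x, y, z] <:+: l₀ := ⟨s, t'', by simp [hs]⟩
    by_cases huz : G.undir y z
    · rw [tr_false_undir G huz] at he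
      injection he with hB he'
      injection he' with hC he''
      subst hB; subst hC
      rcases hadjxy with hd | hd | hd
      · -- x → y, triplex at inl y
        have htrip : (eamp G).triplex (Sum.inl x) (Sum.inl y) (Sum.inr y) :=
          Or.inl ⟨hd, rfl⟩
        refine ⟨fun _ => ?_, fun hnt => absurd htrip hnt⟩
        exact lift_mem G (hl.2.2.1 x y z h3 (Or.inr (Or.inl ⟨hd, huz⟩)))
      · -- y → x, non-triplex, y ∉ Z
        have hnt : ¬ (eamp G).triplex (Sum.inl x) (Sum.inl y) (Sum.inr y) := by
          rintro (⟨h1, _⟩ | ⟨h1, _⟩ | ⟨h1, _⟩)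
          · exact hG.1.2.2.1 y x hd h1
          · exact hG.1.2.2.1 y x hd h1
          · exact h1
        refine ⟨fun ht => absurd ht hnt, fun _ hmem => ?_⟩
        exact emit_prev G hG hl hb hbZ h2 hd ((det_inl G).mp hmem)
      · exact absurd hd hu
    · rw [tr_false_dir G huz] at he
      injection he with hB he'
      subst hB
      obtain ⟨r0, hr0⟩ := tr_false_cons G z t''
      rw [hr0] at he'
      injection he' with hC he''
      subst hC
      have hyz0 : [y, z] <:+: [x, y, z] := ⟨[x], [], by simp⟩
      have hadjyz : G.adj y z := adj2 G hl.1.2 (hyz0.trans h3)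
      constructor
      · rintro (⟨h1, h2'⟩ | ⟨h1, h2'⟩ | ⟨h1, h2'⟩)
        · exact lift_mem G (hl.2.2.1 x y z h3 (Or.inl ⟨h1, h2'⟩))
        · exact h2'.elim
        · exact h1.elim
      · intro hnt hmem
        have hyZ : y ∈ Z := (det_inl G).mp hmem
        have hGnt : ¬ G.triplex x y z := by
          rintro (⟨h1, h2'⟩ | ⟨h1, h2'⟩ | ⟨h1, h2'⟩)
          · exact hnt (Or.inl ⟨h1, h2'⟩)
          · exact huz h2'
          · exact hu h1
        exact hu (hl.2.2.2 x y z h3 ⟨hadjxy, hadjyz, hGnt⟩ hyZ).1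


theorem main_ind {Z : Set α} (hG : G.IsChainGraph) (hl : G.AMPOpenPath Z l₀)
    (ha : l₀.head? = some a) (hb : l₀.getLast? = some b) (haZ : a ∉ Z) (hbZ : b ∉ Z) :
    ∀ (n : ℕ) (l : List α), l.length ≤ n →
      ((∃ s, l₀ = s ++ l) → ∀ A B C, [A, B, C] <:+: tr G false l → Cond G Z A B C) ∧
      (∀ w, (∃ s, l₀ = s ++ w :: l) → (∀ y t, l = y :: t → G.undir w y) →
        ∀ A B C, [A, B, C] <:+: Sum.inr w :: tr G true l → Cond G Z A B C) := by
  intro n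
  induction n with
  | zero =>
    intro l hlen
    have hnil : l = [] := List.eq_nil_of_length_eq_zero (Nat.le_antisymm hlen (Nat.zero_le _))
    subst hnil
    constructor
    · rintro - A B C hinf
      have := triple_len hinf
      simp [tr] at this
    · rintro w - - A B C hinf
      have := triple_len hinf
      simp [tr] at this
  | succ n ih =>
    intro l hlen
    match l with
    | [] =>
      constructor
      · rintro - A B C hinf
        have := triple_len hinf
        simp [tr] at this
      · rintro w - - A B C hinf
        have := triple_len hinf
        simp [tr] at this
    | [x] =>
      constructor
      · rintro - A B C hinf
        have := triple_len hinf
        simp [tr] at this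
      · rintro w ⟨s, hs⟩ - A B C hinf
        have heq : A = Sum.inr w ∧ B = Sum.inr x ∧ C = Sum.inl x := triple_eq hinf
        obtain ⟨rfl, rfl, rfl⟩ := heq
        have hxb : x = b := by
          have : l₀.getLast? = some x := by
            rw [hs, List.getLast?_append_of_ne_nil s (by simp)]
            simp
          rw [this] at hb
          simpa using hb
        have hnt : ¬ (eamp G).triplex (Sum.inr w) (Sum.inr x) (Sum.inl x) := by
          rintro (⟨h1, _⟩ | ⟨h1, _⟩ | ⟨_, h1⟩)
          · exact h1
          · exact h1
          · exact h1
        exact ⟨fun ht => absurd ht hnt,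
          fun _ hmem => hbZ (hxb ▸ ((det_inr G).mp hmem).1)⟩
    | x :: y :: t =>
      have hlen2 : (y :: t).length ≤ n := by
        simp only [List.length_cons] at hlen ⊢
        omega
      have IH := ih (y :: t) hlen2
      constructor
      · -- mode false
        rintro ⟨s, hs⟩ A B C hinf
        by_cases hu : G.undir x y
        · rw [tr_false_undir G hu] at hinf
          rcases infix_triple_cons hinf with ⟨rfl, r, hr⟩ | hinfN
          · -- triple [inl x, inr x, inr y]
            obtain ⟨r0, hr0⟩ := tr_true_cons G y t
            rw [hr0] at hr
            injection hr with hB hrA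
            injection hrA with hC hrB
            subst hB; subst hC
            have hnt : ¬ (eamp G).triplex (Sum.inl x) (Sum.inr x) (Sum.inr y) := by
              rintro (⟨h1, _⟩ | ⟨h1, _⟩ | ⟨h1, _⟩) <;> exact h1
            refine ⟨fun ht => absurd ht hnt, fun _ hmem => ?_⟩
            obtain ⟨hxZ, hpa⟩ := (det_inr G).mp hmem
            have h2 : [x, y] <:+: l₀ := ⟨s, t, by simp [hs]⟩
            rcases left_ext ha h2 with rfl | ⟨wp, hw3⟩
            · exact haZ hxZ
            · have hwx0 : [wp, x] <:+: [wp, x, y] := ⟨[], [y], rfl⟩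
              have hwx : [wp, x] <:+: l₀ := hwx0.trans hw3
              rcases adj2 G hl.1.2 hwx with hd | hd | hd
              · exact emit_next G hG hl ha haZ hwx hd (hpa wp hd)
              · exact emit_prev G hG hl hb hbZ hwx hd hxZ
              · obtain ⟨p, hpd, hpZ⟩ := midseg G hG hl hw3 hd hu hxZ
                exact hpZ (hpa p hpd)
          · exact IH.2 x ⟨s, by simpa using hs⟩
              (fun yq tq he => by cases he; exact hu) A B C hinfN
        · rw [tr_false_dir G hu] at hinf
          rcases infix_triple_cons hinf with ⟨rfl, r, hr⟩ | hinfN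
          · exact L1 G hG hl ha hb haZ hbZ hs hu hr
          · exact IH.1 ⟨s ++ [x], by simp [hs]⟩ A B C hinfN
      · -- mode true
        rintro w ⟨s, hs⟩ hwu A B C hinf
        have hund : G.undir w x := hwu x (y :: t) rfl
        have h3 : [w, x, y] <:+: l₀ := ⟨s, t, by simp [hs]⟩
        have h2 : [x, y] <:+: l₀ := by
          have h20 : [x, y] <:+: [w, x, y] := ⟨[w], [], by simp⟩
          exact h20.trans h3
        by_cases hu : G.undir x y
        · rw [tr_true_undir G hu] at hinf
          rcases infix_triple_cons hinf with ⟨rfl, r, hr⟩ | hinfN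
          · -- triple [inr w, inr x, inr y] mid-segment
            obtain ⟨r0, hr0⟩ := tr_true_cons G y t
            rw [hr0] at hr
            injection hr with hB hrA
            injection hrA with hC hrB
            subst hB; subst hC
            have hnt : ¬ (eamp G).triplex (Sum.inr w) (Sum.inr x) (Sum.inr y) := by
              rintro (⟨h1, _⟩ | ⟨h1, _⟩ | ⟨_, h1⟩) <;> exact h1
            refine ⟨fun ht => absurd ht hnt, fun _ hmem => ?_⟩
            obtain ⟨hxZ, hpa⟩ := (det_inr G).mp hmem
            obtain ⟨p, hpd, hpZ⟩ := midseg G hG hl h3 hund hu hxZ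
            exact hpZ (hpa p hpd)
          · exact IH.2 x ⟨s ++ [w], by simp [hs]⟩
              (fun yq tq he => by cases he; exact hu) A B C hinfN
        · rw [tr_true_dir G hu] at hinf
          rcases infix_triple_cons hinf with ⟨rfl, r, hr⟩ | hinf2
          · -- triple [inr w, inr x, inl x]
            injection hr with hB hrA
            injection hrA with hC hrB
            subst hB; subst hC
            have hnt : ¬ (eamp G).triplex (Sum.inr w) (Sum.inr x) (Sum.inl x) := by
              rintro (⟨h1, _⟩ | ⟨h1, _⟩ | ⟨_, h1⟩)
              · exact h1
              · exact h1
              · exact h1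
            refine ⟨fun ht => absurd ht hnt, fun _ hmem => ?_⟩
            obtain ⟨hxZ, hpa⟩ := (det_inr G).mp hmem
            rcases adj2 G hl.1.2 h2 with hd | hd | hd
            · exact emit_next G hG hl ha haZ h2 hd hxZ
            · exact emit_prev G hG hl hb hbZ h2 hd (hpa y hd)
            · exact hu hd
          · rcases infix_triple_cons hinf2 with ⟨rfl, rr, hrr⟩ | hinf3
            · -- triple [inr x, inl x, inl y]
              injection hrr with hB hrA
              subst hB
              obtain ⟨r0, hr0⟩ := tr_false_cons G y t
              rw [hr0] at hrA
              injection hrA with hC hrB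
              subst hC
              rcases adj2 G hl.1.2 h2 with hd | hd | hd
              · -- x → y : non-triplex, x ∉ Z
                have hnt : ¬ (eamp G).triplex (Sum.inr x) (Sum.inl x) (Sum.inl y) := by
                  rintro (⟨_, h1⟩ | ⟨_, h1⟩ | ⟨h1, _⟩)
                  · exact hG.1.2.2.1 x y hd h1
                  · exact h1
                  · exact h1
                exact ⟨fun ht => absurd ht hnt,
                  fun _ hmem => emit_next G hG hl ha haZ h2 hd ((det_inl G).mp hmem)⟩
              · -- y → x : triplex at inl x
                have htrip : (eamp G).triplex (Sum.inr x) (Sum.inl x) (Sum.inl y) :=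
                  Or.inl ⟨rfl, hd⟩
                refine ⟨fun _ => ?_, fun hnt => absurd htrip hnt⟩
                exact lift_mem G (hl.2.2.1 w x y h3 (Or.inr (Or.inr ⟨hund, hd⟩)))
              · exact (hu hd).elim
            · rcases infix_triple_cons hinf3 with ⟨rfl, rs, hrs⟩ | hinf4
              · exact L1 G hG hl ha hb haZ hbZ (show l₀ = (s ++ [w]) ++ x :: y :: t by
                  simp [hs]) hu hrs
              · exact IH.1 ⟨s ++ [w, x], by simp [hs]⟩ A B C hinf4

end Stmt5Aux

/-- every Z-open path between `a` and `b` in G can be transformed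
into a Z-open path between `a` and `b` in the EAMP CG G' (under the
deterministic-node semantics of G'). -/
theorem stmt5 {α : Type*} (G : MixedGraph α) (hG : G.IsChainGraph)
    (a b : α) (Z : Set α) (haZ : a ∉ Z) (hbZ : b ∉ Z)
    (l : List α) (hl : G.AMPOpenPath Z l)
    (ha : l.head? = some a) (hb : l.getLast? = some b) :
    ∃ l' : List (α ⊕ α), l'.head? = some (Sum.inl a) ∧ l'.getLast? = some (Sum.inl b) ∧
      (eamp G).AMPOpenPath (MixedGraph.DSet (eampDet G) (Sum.inl '' Z)) l' := by
  cases l with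
  | nil => simp at ha
  | cons x t₀ =>
    have hxa : x = a := by simpa using ha
    have hmain := main_ind G hG hl ha hb haZ hbZ (x :: t₀).length (x :: t₀) le_rfl
    obtain ⟨r, hr⟩ := tr_false_cons G x t₀
    refine ⟨tr G false (x :: t₀), ?_, ?_, ⟨?_, ?_⟩, ?_, ?_, ?_⟩
    · rw [hr, hxa]
      rfl
    · rw [tr_last G t₀ x false, hb]
      rfl
    · rw [hr]
      simp
    · exact tr_chain G t₀ x hl.1.2 false
    · exact (tr_nodup G t₀ x hl.2.1 false).1
    · intro A B C hinf ht
      exact (hmain.1 ⟨[], rfl⟩ A B C hinf).1 ht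
    · intro A B C hinf hnt hmem
      exact absurd hmem ((hmain.1 ⟨[], rfl⟩ A B C hinf).2 hnt.2.2)
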